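/- Let μ be a probability measure on a measurable space Ω, let f : ℝ → ℝ be convex and differentiable with f(1) = 0, and let δ > 0. For any two measurable sets A₁, A₂ ⊆ Ω the following hold: (i) if R_adv(A₁) < 1, then R_adv(A₁) < R_adv(A₂) if and only if μ(A₁) < μ(A₂); (ii) if R_adv(A₁) = 1 and μ(A₁) ≤ μ(A₂), then R_adv(A₂) = 1. (This is the population version of Theorem 1: under the 0-1 loss, the adversarial risk of a classifier depends on the classifier only through the measure of its error set, monotonically.) -/

import Mathlib

open MeasureTheory

/-- The uncertainty set of density ratios: measurable, nonnegative functions `r` with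
`∫ f (r ω) ∂μ ≤ δ` and `∫ r ω ∂μ = 1` (both integrals existing). -/
def Uf {Ω : Type*} [MeasurableSpace Ω] (μ : Measure Ω) (f : ℝ → ℝ) (δ : ℝ) :
    Set (Ω → ℝ) :=
  {r | Measurable r ∧ (∀ ω, 0 ≤ r ω) ∧
    Integrable (fun ω => f (r ω)) μ ∧ Integrable r μ ∧
    (∫ ω, f (r ω) ∂μ) ≤ δ ∧ (∫ ω, r ω ∂μ) = 1}

/-- The adversarial risk of a classifier with error set `A` under the 0-1 loss:
the supremum of `∫_A r dμ` over density ratios `r` in the uncertainty set. -/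
noncomputable def Radv {Ω : Type*} [MeasurableSpace Ω] (μ : Measure Ω)
    (f : ℝ → ℝ) (δ : ℝ) (A : Set Ω) : ℝ :=
  sSup {x | ∃ r ∈ Uf μ f δ, x = ∫ ω in A, r ω ∂μ}

section Aux

variable {Ω : Type*} [MeasurableSpace Ω] {μ : Measure Ω} [IsProbabilityMeasure μ]
  {f : ℝ → ℝ} {δ : ℝ}

lemma one_mem_Uf (hf1 : f 1 = 0) (hδ : 0 ≤ δ) : (fun _ : Ω => (1 : ℝ)) ∈ Uf μ f δ := by
  refine ⟨measurable_const, fun _ => zero_le_one, ?_, integrable_const 1, ?_, ?_⟩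
  · simpa using integrable_const (f 1)
  · simpa [hf1] using hδ
  · simp

lemma Uf_val_nonneg {r : Ω → ℝ} (hr : r ∈ Uf μ f δ) (A : Set Ω) :
    0 ≤ ∫ ω in A, r ω ∂μ :=
  integral_nonneg hr.2.1

lemma Uf_val_le_one {r : Ω → ℝ} (hr : r ∈ Uf μ f δ) (A : Set Ω) :
    ∫ ω in A, r ω ∂μ ≤ 1 := by
  have := setIntegral_le_integral (s := A) hr.2.2.2.1
    (Filter.Eventually.of_forall hr.2.1)
  rw [hr.2.2.2.2.2] at this
  exact this

lemma bddAbove_RadvSet (A : Set Ω) :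
    BddAbove {x | ∃ r ∈ Uf μ f δ, x = ∫ ω in A, r ω ∂μ} := by
  refine ⟨1, fun x hx => ?_⟩
  obtain ⟨r, hr, rfl⟩ := hx
  exact Uf_val_le_one hr A

lemma nonempty_RadvSet (hf1 : f 1 = 0) (hδ : 0 ≤ δ) (A : Set Ω) :
    Set.Nonempty {x | ∃ r ∈ Uf μ f δ, x = ∫ ω in A, r ω ∂μ} :=
  ⟨∫ ω in A, (1 : ℝ) ∂μ, (fun _ => (1 : ℝ)), one_mem_Uf hf1 hδ, rfl⟩

lemma Radv_le_one (hf1 : f 1 = 0) (hδ : 0 ≤ δ) (A : Set Ω) : Radv μ f δ A ≤ 1 := by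
  refine csSup_le (nonempty_RadvSet hf1 hδ A) ?_
  rintro x ⟨r, hr, rfl⟩
  exact Uf_val_le_one hr A

lemma measure_le_Radv (hf1 : f 1 = 0) (hδ : 0 ≤ δ) (A : Set Ω) :
    (μ A).toReal ≤ Radv μ f δ A := by
  have hmem : (μ A).toReal ∈ {x | ∃ r ∈ Uf μ f δ, x = ∫ ω in A, r ω ∂μ} :=
    ⟨(fun _ => (1 : ℝ)), one_mem_Uf hf1 hδ, by simp; rfl⟩
  exact le_csSup (bddAbove_RadvSet A) hmem

lemma val_le_Radv {r : Ω → ℝ} (hr : r ∈ Uf μ f δ) (A : Set Ω) :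
    ∫ ω in A, r ω ∂μ ≤ Radv μ f δ A :=
  le_csSup (bddAbove_RadvSet A) ⟨r, hr, rfl⟩

/-- The key transfer construction: given `r ∈ Uf` and sets with
`0 < μ A₁ ≤ μ A₂`, `μ A₁ < 1`, there is `r' ∈ Uf` whose mass on `A₂` is the mass of
`r` on `A₁` plus a boost proportional to `μ A₂ - μ A₁`. -/
lemma Uf_transfer (hconv : ConvexOn ℝ Set.univ f) (hcont : Continuous f)
    {A₁ A₂ : Set Ω} (hA₁ : MeasurableSet A₁) (hA₂ : MeasurableSet A₂)
    {r : Ω → ℝ} (hr : r ∈ Uf μ f δ)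
    (hp0 : 0 < (μ A₁).toReal) (hp1 : (μ A₁).toReal < 1)
    (hpq : (μ A₁).toReal ≤ (μ A₂).toReal) :
    ∃ r' ∈ Uf μ f δ, ∫ ω in A₂, r' ω ∂μ = (∫ ω in A₁, r ω ∂μ) +
      (1 - ∫ ω in A₁, r ω ∂μ) / (1 - (μ A₁).toReal) *
        ((μ A₂).toReal - (μ A₁).toReal) := by
  classical
  obtain ⟨hrm, hr0, hrfi, hri, hrδ, hr1⟩ := hr
  set p : ℝ := (μ A₁).toReal with hp
  set q : ℝ := (μ A₂).toReal with hq
  set v : ℝ := ∫ ω in A₁, r ω ∂μ with hv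
  have hq0 : 0 < q := lt_of_lt_of_le hp0 hpq
  have hv0 : 0 ≤ v := integral_nonneg hr0
  have hv1 : v ≤ 1 := by
    have := setIntegral_le_integral (s := A₁) hri (Filter.Eventually.of_forall hr0)
    rw [hr1] at this; exact this
  set b : ℝ := (1 - v) / (1 - p) with hb
  set a : ℝ := v / p with ha
  set c : ℝ := (v + b * (q - p)) / q with hc
  have hpne : p ≠ 0 := hp0.ne'
  have hqne : q ≠ 0 := hq0.ne'
  have h1pne : (1 : ℝ) - p ≠ 0 := ne_of_gt (by linarith)
  have hb0 : 0 ≤ b := div_nonneg (by linarith) (by linarith)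
  have ha0 : 0 ≤ a := div_nonneg hv0 hp0.le
  have hc0 : 0 ≤ c := by
    apply div_nonneg _ hq0.le
    have : 0 ≤ b * (q - p) := mul_nonneg hb0 (by linarith)
    linarith
  -- measure of the complements
  have hμ1c : (μ A₁ᶜ).toReal = 1 - p := by
    rw [prob_compl_eq_one_sub hA₁, ENNReal.toReal_sub_of_le prob_le_one ENNReal.one_ne_top]
    simp [hp]
  have hμ2c : (μ A₂ᶜ).toReal = 1 - q := by
    rw [prob_compl_eq_one_sub hA₂, ENNReal.toReal_sub_of_le prob_le_one ENNReal.one_ne_top]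
    simp [hq]
  have hμ1c0 : μ A₁ᶜ ≠ 0 := by
    intro h
    rw [h] at hμ1c
    simp at hμ1c
    linarith
  have hμ10 : μ A₁ ≠ 0 := by
    intro h
    rw [hp, h] at hp0
    simp at hp0
  -- integral of r over A₁ᶜ
  have hcompl : ∫ ω in A₁ᶜ, r ω ∂μ = 1 - v := by
    have := integral_add_compl hA₁ hri
    rw [hr1] at this
    linarith [this]
  -- Jensen on A₁ :  p * f a ≤ ∫_{A₁} f ∘ r
  have hJ1 : p * f a ≤ ∫ ω in A₁, f (r ω) ∂μ := by
    have hJ := hconv.map_set_average_le hcont.continuousOn isClosed_univ hμ10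
      (measure_ne_top μ A₁) (Filter.Eventually.of_forall fun x => Set.mem_univ _)
      hri.integrableOn (hrfi.integrableOn : IntegrableOn (fun ω => f (r ω)) A₁ μ)
    rw [setAverage_eq, setAverage_eq] at hJ
    simp only [smul_eq_mul, ← hp, ← hv] at hJ
    have : a = p⁻¹ * v := by rw [ha, inv_mul_eq_div]
    rw [this]
    calc p * f (p⁻¹ * v) ≤ p * (p⁻¹ * ∫ ω in A₁, f (r ω) ∂μ) :=
          mul_le_mul_of_nonneg_left hJ hp0.le
      _ = ∫ ω in A₁, f (r ω) ∂μ := by rw [← mul_assoc, mul_inv_cancel₀ hpne, one_mul]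
  -- Jensen on A₁ᶜ :  (1-p) * f b ≤ ∫_{A₁ᶜ} f ∘ r
  have hJ2 : (1 - p) * f b ≤ ∫ ω in A₁ᶜ, f (r ω) ∂μ := by
    have hJ := hconv.map_set_average_le hcont.continuousOn isClosed_univ hμ1c0
      (measure_ne_top μ A₁ᶜ) (Filter.Eventually.of_forall fun x => Set.mem_univ _)
      hri.integrableOn (hrfi.integrableOn : IntegrableOn (fun ω => f (r ω)) A₁ᶜ μ)
    rw [setAverage_eq, setAverage_eq, show μ.real A₁ᶜ = 1 - p from hμ1c, hcompl] at hJ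
    simp only [smul_eq_mul] at hJ
    have hbeq : b = (1 - p)⁻¹ * (1 - v) := by rw [hb, inv_mul_eq_div]
    rw [hbeq]
    calc (1 - p) * f ((1 - p)⁻¹ * (1 - v))
        ≤ (1 - p) * ((1 - p)⁻¹ * ∫ ω in A₁ᶜ, f (r ω) ∂μ) :=
          mul_le_mul_of_nonneg_left hJ (by linarith)
      _ = ∫ ω in A₁ᶜ, f (r ω) ∂μ := by rw [← mul_assoc, mul_inv_cancel₀ h1pne, one_mul]
  -- convexity step :  q * f c ≤ p * f a + (q - p) * f b
  have hC : q * f c ≤ p * f a + (q - p) * f b := by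
    have hceq : c = (p / q) • a + ((q - p) / q) • b := by
      rw [hc, ha, smul_eq_mul, smul_eq_mul, div_mul_div_comm, mul_comm p v, mul_div_mul_right _ _ hpne]
      ring
    have := hconv.2 (Set.mem_univ a) (Set.mem_univ b)
      (show (0:ℝ) ≤ p / q from div_nonneg hp0.le hq0.le)
      (show (0:ℝ) ≤ (q - p) / q from div_nonneg (by linarith) hq0.le)
      (show p / q + (q - p) / q = 1 by field_simp; ring)
    rw [← hceq] at this
    calc q * f c ≤ q * (p / q * f a + (q - p) / q * f b) :=
          mul_le_mul_of_nonneg_left (by simpa using this) hq0.le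
      _ = p * f a + (q - p) * f b := by field_simp
  -- the new density ratio
  set r' : Ω → ℝ := A₂.piecewise (fun _ => c) (fun _ => b) with hr'
  have hr'm : Measurable r' := Measurable.piecewise hA₂ measurable_const measurable_const
  have hr'0 : ∀ ω, 0 ≤ r' ω := by
    intro ω
    by_cases h : ω ∈ A₂ <;> simp [hr', Set.piecewise, h, hc0, hb0]
  have hr'i : Integrable r' μ :=
    Integrable.piecewise hA₂ (integrable_const c).integrableOn (integrable_const b).integrableOn
  have hfr' : (fun ω => f (r' ω)) = A₂.piecewise (fun _ => f c) (fun _ => f b) := by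
    funext ω
    by_cases h : ω ∈ A₂ <;> simp [hr', Set.piecewise, h]
  have hr'fi : Integrable (fun ω => f (r' ω)) μ := by
    rw [hfr']
    exact Integrable.piecewise hA₂ (integrable_const (f c)).integrableOn
      (integrable_const (f b)).integrableOn
  -- set integrals of r'
  have hint2 : ∫ ω in A₂, r' ω ∂μ = q * c := by
    have h : ∫ ω in A₂, r' ω ∂μ = ∫ _ω in A₂, c ∂μ :=
      setIntegral_congr_fun (g := fun _ => c) hA₂ (fun x hx => by simp [hr', Set.piecewise, hx])
    rw [h, setIntegral_const, smul_eq_mul]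
    rfl
  have hint2c : ∫ ω in A₂ᶜ, r' ω ∂μ = (1 - q) * b := by
    have h : ∫ ω in A₂ᶜ, r' ω ∂μ = ∫ _ω in A₂ᶜ, b ∂μ :=
      setIntegral_congr_fun (g := fun _ => b) hA₂.compl
        (fun x hx => by simp [hr', Set.piecewise, (by simpa using hx : x ∉ A₂)])
    rw [h, setIntegral_const, smul_eq_mul, show μ.real A₂ᶜ = 1 - q from hμ2c]
  have hqc : q * c = v + b * (q - p) := by
    rw [hc]; field_simp
  have hb1p : b * (1 - p) = 1 - v := by
    rw [hb]; field_simp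
  have hr'1 : ∫ ω, r' ω ∂μ = 1 := by
    rw [← integral_add_compl hA₂ hr'i, hint2, hint2c, hqc]
    linarith [hb1p]
  -- the f-divergence constraint
  have hfint2 : ∫ ω in A₂, f (r' ω) ∂μ = q * f c := by
    have h : ∫ ω in A₂, f (r' ω) ∂μ = ∫ _ω in A₂, f c ∂μ :=
      setIntegral_congr_fun (g := fun _ => f c) hA₂
        (fun x hx => by simp [hr', Set.piecewise, hx])
    rw [h, setIntegral_const, smul_eq_mul]
    rfl
  have hfint2c : ∫ ω in A₂ᶜ, f (r' ω) ∂μ = (1 - q) * f b := by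
    have h : ∫ ω in A₂ᶜ, f (r' ω) ∂μ = ∫ _ω in A₂ᶜ, f b ∂μ :=
      setIntegral_congr_fun (g := fun _ => f b) hA₂.compl
        (fun x hx => by simp [hr', Set.piecewise, (by simpa using hx : x ∉ A₂)])
    rw [h, setIntegral_const, smul_eq_mul, show μ.real A₂ᶜ = 1 - q from hμ2c]
  have hsplit : ∫ ω in A₁, f (r ω) ∂μ + ∫ ω in A₁ᶜ, f (r ω) ∂μ = ∫ ω, f (r ω) ∂μ :=
    integral_add_compl hA₁ hrfi
  have hr'δ : ∫ ω, f (r' ω) ∂μ ≤ δ := by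
    rw [← integral_add_compl hA₂ hr'fi, hfint2, hfint2c]
    have h1q : 0 ≤ 1 - q := by
      have : q ≤ 1 := by
        rw [hq]
        simpa using ENNReal.toReal_mono ENNReal.one_ne_top (prob_le_one (μ := μ) (s := A₂))
      linarith
    nlinarith [mul_le_mul_of_nonneg_left (le_refl (f b)) h1q]
  refine ⟨r', ⟨hr'm, hr'0, hr'fi, hr'i, hr'δ, hr'1⟩, ?_⟩
  rw [hint2, hqc, hb]

/-- The main quantitative inequality relating the adversarial risks of two sets. -/
lemma Radv_main (hconv : ConvexOn ℝ Set.univ f) (hcont : Continuous f)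
    (hf1 : f 1 = 0) (hδ : 0 < δ)
    {A₁ A₂ : Set Ω} (hA₁ : MeasurableSet A₁) (hA₂ : MeasurableSet A₂)
    (hpq : (μ A₁).toReal ≤ (μ A₂).toReal) (hp1 : (μ A₁).toReal < 1) :
    Radv μ f δ A₁ + (1 - Radv μ f δ A₁) * ((μ A₂).toReal - (μ A₁).toReal)
      / (1 - (μ A₁).toReal) ≤ Radv μ f δ A₂ := by
  set p : ℝ := (μ A₁).toReal with hp
  set q : ℝ := (μ A₂).toReal with hq
  have hpnn : 0 ≤ p := by rw [hp]; exact ENNReal.toReal_nonneg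
  rcases eq_or_lt_of_le hpnn with hp0 | hp0
  · -- p = 0 : then μ A₁ = 0, every value over A₁ is 0 and Radv A₁ = 0
    have hμ0 : μ A₁ = 0 := by
      have hz : (μ A₁).toReal = 0 := by rw [← hp, ← hp0]
      exact ((ENNReal.toReal_eq_zero_iff _).mp hz).resolve_right (measure_ne_top μ A₁)
    have hres : μ.restrict A₁ = 0 := Measure.restrict_eq_zero.mpr hμ0
    have hR1 : Radv μ f δ A₁ = 0 := by
      have hset : {x | ∃ r ∈ Uf μ f δ, x = ∫ ω in A₁, r ω ∂μ} = {0} := by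
        ext x
        constructor
        · rintro ⟨r, hr, rfl⟩
          simp [hres]
        · rintro rfl
          exact ⟨(fun _ => (1:ℝ)), one_mem_Uf hf1 hδ.le, by simp [hres]⟩
      rw [Radv, hset, csSup_singleton]
    rw [hR1, ← hp0]
    have := measure_le_Radv hf1 hδ.le (μ := μ) A₂
    rw [← hq] at this
    simpa using this
  · -- 0 < p : use the transfer construction
    have key : ∀ x ∈ {x | ∃ r ∈ Uf μ f δ, x = ∫ ω in A₁, r ω ∂μ},
        x + (1 - x) / (1 - p) * (q - p) ≤ Radv μ f δ A₂ := by
      rintro x ⟨r, hr, rfl⟩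
      obtain ⟨r', hr', heq⟩ := Uf_transfer hconv hcont hA₁ hA₂ hr hp0 hp1 hpq
      rw [← hp, ← hq] at heq
      rw [← heq]
      exact val_le_Radv hr' A₂
    refine le_of_forall_pos_le_add ?_
    intro ε hε
    have hRdef : Radv μ f δ A₁ = sSup {x | ∃ r ∈ Uf μ f δ, x = ∫ ω in A₁, r ω ∂μ} := rfl
    have hlt : Radv μ f δ A₁ - ε < sSup {x | ∃ r ∈ Uf μ f δ, x = ∫ ω in A₁, r ω ∂μ} := by
      rw [← hRdef]; linarith
    obtain ⟨x, hxmem, hx⟩ := exists_lt_of_lt_csSup (nonempty_RadvSet hf1 hδ.le A₁) hlt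
    have hxle : x ≤ Radv μ f δ A₁ := le_csSup (bddAbove_RadvSet A₁) hxmem
    have h1 := key x hxmem
    have ht : 0 ≤ (q - p) / (1 - p) := div_nonneg (by linarith) (by linarith)
    have h2 : (1 - Radv μ f δ A₁) * ((q - p) / (1 - p)) ≤ (1 - x) * ((q - p) / (1 - p)) :=
      mul_le_mul_of_nonneg_right (by linarith) ht
    have e1 : (1 - Radv μ f δ A₁) * (q - p) / (1 - p)
        = (1 - Radv μ f δ A₁) * ((q - p) / (1 - p)) := by ring
    have e2 : x + (1 - x) / (1 - p) * (q - p) = x + (1 - x) * ((q - p) / (1 - p)) := by ring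
    rw [e1]
    rw [e2] at h1
    linarith

end Aux

/-- Population version of Theorem 1: with the 0-1 loss, the adversarial risk is a
monotonic function of the ordinary risk `μ A`. -/
theorem stmt0 {Ω : Type*} [MeasurableSpace Ω] (μ : Measure Ω) [IsProbabilityMeasure μ]
    (f : ℝ → ℝ) (hconv : ConvexOn ℝ Set.univ f) (hdiff : Differentiable ℝ f)
    (hf1 : f 1 = 0) (δ : ℝ) (hδ : 0 < δ)
    (A₁ A₂ : Set Ω) (hA₁ : MeasurableSet A₁) (hA₂ : MeasurableSet A₂) :
    (Radv μ f δ A₁ < 1 → (Radv μ f δ A₁ < Radv μ f δ A₂ ↔ μ A₁ < μ A₂)) ∧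
    (Radv μ f δ A₁ = 1 → μ A₁ ≤ μ A₂ → Radv μ f δ A₂ = 1) := by
  have hcont : Continuous f := hdiff.continuous
  have mono : ∀ (A B : Set Ω), MeasurableSet A → MeasurableSet B → μ A ≤ μ B →
      Radv μ f δ A ≤ Radv μ f δ B := by
    intro A B hA hB h
    have hpq : (μ A).toReal ≤ (μ B).toReal := ENNReal.toReal_mono (measure_ne_top μ B) h
    have hq1 : (μ B).toReal ≤ 1 := by
      simpa using ENNReal.toReal_mono ENNReal.one_ne_top (prob_le_one (μ := μ) (s := B))
    rcases lt_or_ge (μ A).toReal 1 with hp1 | hp1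
    · have key := Radv_main hconv hcont hf1 hδ hA hB hpq hp1
      have hR1 : Radv μ f δ A ≤ 1 := Radv_le_one hf1 hδ.le A
      have hnn : 0 ≤ (1 - Radv μ f δ A) * ((μ B).toReal - (μ A).toReal)
          / (1 - (μ A).toReal) :=
        div_nonneg (mul_nonneg (by linarith) (by linarith)) (by linarith)
      linarith
    · have hq1' : (1:ℝ) ≤ (μ B).toReal := le_trans hp1 hpq
      have : (μ B).toReal = 1 := le_antisymm hq1 hq1'
      have h1 := measure_le_Radv hf1 hδ.le (μ := μ) B
      have h2 := Radv_le_one hf1 hδ.le (μ := μ) A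
      linarith
  constructor
  · intro h1
    constructor
    · intro hR
      by_contra hm
      push_neg at hm
      exact absurd (mono A₂ A₁ hA₂ hA₁ hm) (not_le.mpr hR)
    · intro hm
      have hp1 : (μ A₁).toReal < 1 :=
        lt_of_le_of_lt (measure_le_Radv hf1 hδ.le A₁) h1
      have hpq : (μ A₁).toReal < (μ A₂).toReal :=
        (ENNReal.toReal_lt_toReal (measure_ne_top μ A₁) (measure_ne_top μ A₂)).mpr hm
      have key := Radv_main hconv hcont hf1 hδ hA₁ hA₂ hpq.le hp1
      have hpos : 0 < (1 - Radv μ f δ A₁) * ((μ A₂).toReal - (μ A₁).toReal)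
          / (1 - (μ A₁).toReal) :=
        div_pos (mul_pos (by linarith) (by linarith)) (by linarith)
      linarith
  · intro h1 hm
    have h2 := mono A₁ A₂ hA₁ hA₂ hm
    rw [h1] at h2
    exact le_antisymm (Radv_le_one hf1 hδ.le A₂) h2
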